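/- Let N be a finite nontrivial f-near-ring. Then the additive group (N,+) is elementary abelian: addition on N is commutative, p := addOrderOf (1 : N) is a prime, and p • n = 0 for every n : N. -/

import Mathlib

/-- Number-theoretic key lemma: if `p ≥ 2` is not prime, there are `m, k` with
`0 < m < p`, `k` coprime to `p`, `k % p ≠ 1`, and `m * k ≡ m [MOD p]`. -/
theorem stmt12_nt (p : ℕ) (hp : 2 ≤ p) (hnp : ¬ p.Prime) :
    ∃ m k : ℕ, 0 < m ∧ m < p ∧ Nat.Coprime k p ∧ k % p ≠ 1 ∧
      (m * k) % p = m % p := by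
  have hp0 : 0 < p := by omega
  set q := p.minFac with hqdef
  have hq : q.Prime := Nat.minFac_prime (by omega)
  have hqd : q ∣ p := Nat.minFac_dvd p
  obtain ⟨m, hpm⟩ := hqd
  have hq1 : 1 < q := hq.one_lt
  have hm0 : 0 < m := by
    rcases Nat.eq_zero_or_pos m with h | h
    · subst h; simp at hpm; omega
    · exact h
  have hm1 : 1 < m := by
    by_contra h
    have hm1' : m = 1 := by omega
    subst hm1'
    rw [Nat.mul_one] at hpm
    exact hnp (hpm ▸ hq)
  have hmp : m < p := by
    rw [hpm]
    calc m = 1 * m := (one_mul m).symm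
    _ < q * m := by apply Nat.mul_lt_mul_of_lt_of_le hq1 le_rfl hm0
  have hmdvd : m ∣ p := ⟨q, by rw [hpm]; ring⟩
  by_cases hqm : q ∣ m
  · -- p divides m * m
    refine ⟨m, m + 1, hm0, hmp, ?_, ?_, ?_⟩
    · have h1 : Nat.Coprime (m + 1) m := by
        rw [Nat.add_comm, Nat.coprime_add_self_left]
        exact Nat.coprime_one_left m
      have h2 : Nat.Coprime (m + 1) q := by
        rw [Nat.coprime_comm, hq.coprime_iff_not_dvd]
        intro hdk
        have h1d : q ∣ 1 := by
          have := Nat.dvd_sub hdk hqm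
          simpa using this
        rw [Nat.dvd_one] at h1d
        omega
      rw [hpm]
      exact Nat.Coprime.mul_right h2 h1
    · have hlt : m + 1 < p := by
        rcases Nat.lt_or_ge (m+1) p with h | h
        · exact h
        · exfalso
          have : m + 1 = p := by omega
          have : m ∣ m + 1 := this ▸ hmdvd
          have h1 := (Nat.dvd_add_right (dvd_refl m)).mp this
          rw [Nat.dvd_one] at h1
          omega
      rw [Nat.mod_eq_of_lt hlt]; omega
    · obtain ⟨t, ht⟩ := hqm
      have : m * (m + 1) = m + p * t := by
        rw [hpm, ht]; ring
      rw [this, Nat.add_mul_mod_self_left]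
  · have hcop : Nat.Coprime q m := (Nat.Prime.coprime_iff_not_dvd hq).mpr hqm
    have hm3 : 3 ≤ m := by
      rcases Nat.lt_or_ge m 3 with h | h
      · exfalso
        have hm2 : m = 2 := by omega
        have : q ≤ 2 := hqdef ▸ Nat.minFac_le_of_dvd (by omega) (hm2 ▸ hmdvd)
        have hq2 : q = 2 := by omega
        exact hqm (by rw [hq2, hm2])
      · exact h
    obtain ⟨k, hk1, hk2⟩ := Nat.chineseRemainder hcop 1 (m - 1)
    refine ⟨m, k, hm0, hmp, ?_, ?_, ?_⟩
    · have hkq : Nat.Coprime k q := by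
        rw [Nat.coprime_comm, hq.coprime_iff_not_dvd]
        intro hdk
        have : (1 : ℕ) % q = 0 := by
          have := hk1.symm.trans (Nat.modEq_zero_iff_dvd.mpr hdk)
          simpa [Nat.ModEq] using this
        rw [Nat.mod_eq_of_lt hq1] at this; omega
      have hkm : Nat.Coprime k m := by
        have hmod : k % m = m - 1 := by
          have h := hk2
          unfold Nat.ModEq at h
          rwa [Nat.mod_eq_of_lt (show m - 1 < m by omega)] at h
        have hco : Nat.Coprime (m - 1) m := by
          have h := Nat.coprime_add_self_right.mpr (Nat.coprime_one_right (m - 1))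
          rwa [show 1 + (m - 1) = m by omega] at h
        have : Nat.gcd m k = 1 := by
          rw [Nat.gcd_rec, hmod]
          exact hco
        exact Nat.coprime_comm.mp this
      rw [hpm]; exact Nat.Coprime.mul_right hkq hkm
    · intro h
      have hpk : k ≡ 1 [MOD p] := by
        unfold Nat.ModEq
        rw [h, Nat.mod_eq_of_lt (by omega)]
      have hmk : k ≡ 1 [MOD m] := hpk.of_dvd hmdvd
      have := hk2.symm.trans hmk
      unfold Nat.ModEq at this
      rw [Nat.mod_eq_of_lt (show m - 1 < m by omega), Nat.mod_eq_of_lt (by omega)] at this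
      omega
    · have : k ≡ 1 [MOD q] := hk1
      have h2 : m * k ≡ m * 1 [MOD m * q] := Nat.ModEq.mul_left' m this
      have h3 : m * q = p := by rw [hpm]; ring
      rw [h3] at h2
      simpa [Nat.ModEq, Nat.mul_one] using h2

/-- The additive group of a finite nontrivial f-near-ring is
elementary abelian of prime exponent `p = addOrderOf 1`. -/
theorem stmt12 {N : Type*} [AddGroup N] [Mul N] [One N] [Finite N]
    (hassoc : ∀ a b c : N, (a * b) * c = a * (b * c))
    (hdist : ∀ a b c : N, (a + b) * c = a * c + b * c)
    (honel : ∀ a : N, 1 * a = a) (honer : ∀ a : N, a * 1 = a)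
    (hzero : ∀ a : N, a * 0 = 0)
    (hf : ∀ u : N, (∃ v : N, u * v = 1 ∧ v * u = 1) → u ≠ 1 →
      ∀ n : N, n * u = n → n = 0)
    (hnt : (0 : N) ≠ 1) :
    (∀ a b : N, a + b = b + a) ∧
    Nat.Prime (addOrderOf (1 : N)) ∧
    (∀ n : N, addOrderOf (1 : N) • n = 0) := by
  -- basic near-ring facts
  have hzmul : ∀ a : N, 0 * a = 0 := by
    intro a
    have h := hdist 0 0 a
    rw [add_zero] at h
    exact left_eq_add.mp h
  have hnegmul : ∀ a b : N, (-a) * b = -(a * b) := by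
    intro a b
    have h := hdist a (-a) b
    rw [add_neg_cancel, hzmul] at h
    exact (neg_eq_of_add_eq_zero_right h.symm).symm
  -- addition is commutative
  have comm : ∀ a b : N, a + b = b + a := by
    by_cases hneg1 : (-1 : N) = 1
    · -- characteristic 2 case
      have h2 : ∀ n : N, n + n = 0 := by
        intro n
        have h11 : (1 : N) + 1 = 0 := by
          nth_rewrite 1 [← hneg1]
          rw [neg_add_cancel]
        calc n + n = 1 * n + 1 * n := by rw [honel]
        _ = ((1 : N) + 1) * n := (hdist 1 1 n).symm
        _ = 0 * n := by rw [h11]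
        _ = 0 := hzmul n
      intro a b
      have hinv : ∀ x : N, -x = x := fun x => neg_eq_of_add_eq_zero_right (h2 x)
      calc a + b = -(a + b) := (hinv _).symm
      _ = -b + -a := neg_add_rev a b
      _ = b + a := by rw [hinv, hinv]
    · -- -1 ≠ 1 : σ(n) = n * (-1) is a fixed-point-free automorphism of order 2
      set σ : N → N := fun n => n * (-1) with hσ
      have hσsq : ∀ n : N, σ (σ n) = n := by
        intro n
        have hmm : (-1 : N) * (-1) = 1 := by
          rw [hnegmul, honel, neg_neg]
        simp only [hσ]
        rw [hassoc, hmm, honer]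
      have hσadd : ∀ a b : N, σ (a + b) = σ a + σ b := fun a b => hdist a b (-1)
      have hσneg : ∀ a : N, σ (-a) = -(σ a) := fun a => hnegmul a (-1)
      have hσfpf : ∀ n : N, σ n = n → n = 0 := by
        intro n hn
        refine hf (-1) ⟨-1, ?_, ?_⟩ hneg1 n hn <;>
          · rw [hnegmul, honel, neg_neg]
      have hinj : Function.Injective (fun n : N => -n + σ n) := by
        intro n m h
        simp only at h
        have h1 : σ n = n + (-m + σ m) := by
          rw [← h, ← add_assoc, add_neg_cancel, zero_add]
        have h2 : σ (n - m) = n - m := by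
          rw [sub_eq_add_neg, hσadd, hσneg, h1]
          simp [add_assoc]
        have := hσfpf _ h2
        exact sub_eq_zero.mp this
      have hsurj : Function.Surjective (fun n : N => -n + σ n) :=
        Finite.injective_iff_surjective.mp hinj
      have hσinv : ∀ g : N, σ g = -g := by
        intro g
        obtain ⟨n, hn⟩ := hsurj g
        simp only at hn
        rw [← hn, hσadd, hσneg, hσsq, neg_add_rev, neg_neg]
      intro a b
      have h1 : -(a + b) = -a + -b := by
        rw [← hσinv, hσadd, hσinv, hσinv]
      have h2 : (-a) + (-b) = -b + -a := by rw [← h1, neg_add_rev]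
      have := h2
      have h3 := congrArg (fun x => -x) h2
      simp only [neg_add_rev, neg_neg] at h3
      exact h3.symm
  -- right multiplication expands natural multiples of 1
  have hsmul_mul : ∀ (k : ℕ) (n : N), (k • (1 : N)) * n = k • n := by
    intro k
    induction k with
    | zero => intro n; simp [hzmul]
    | succ k ih =>
      intro n
      rw [succ_nsmul, succ_nsmul, hdist, ih, honel]
  set p := addOrderOf (1 : N) with hpdef
  have hp1 : p • (1 : N) = 0 := addOrderOf_nsmul_eq_zero (1 : N)
  have hppos : 0 < p := addOrderOf_pos (1 : N)
  have hpne1 : p ≠ 1 := by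
    intro h
    rw [hpdef] at h
    exact hnt ((AddMonoid.addOrderOf_eq_one_iff).mp h).symm
  have hp2 : 2 ≤ p := by omega
  -- exponent p
  have hexp : ∀ n : N, p • n = 0 := by
    intro n
    rw [← hsmul_mul, hp1, hzmul]
  -- reduction of multiples mod p
  have hmod : ∀ k : ℕ, k • (1 : N) = (k % p) • (1 : N) :=
    fun k => (mod_addOrderOf_nsmul (1 : N) k).symm
  have hmulsmul : ∀ a b : ℕ, (a • (1 : N)) * (b • (1 : N)) = (b * a) • (1 : N) := by
    intro a b
    rw [hsmul_mul, ← mul_nsmul]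
  -- p is prime
  have hprime : Nat.Prime p := by
    by_contra hnp
    obtain ⟨m, k, hm0, hmp, hkcop, hk1, hmk⟩ := stmt12_nt p hp2 hnp
    -- the unit u = k • 1
    obtain ⟨k', -, hk'⟩ := Nat.exists_mul_mod_eq_one_of_coprime hkcop (by omega)
    have hunit : (k • (1 : N)) * (k' • (1 : N)) = 1 ∧
        (k' • (1 : N)) * (k • (1 : N)) = 1 := by
      constructor
      · rw [hmulsmul, hmod, mul_comm, hk', one_nsmul]
      · rw [hmulsmul, hmod, hk', one_nsmul]
    have hune : k • (1 : N) ≠ 1 := by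
      intro h
      rw [hmod] at h
      rcases Nat.eq_zero_or_pos (k % p) with h0 | h0
      · rw [h0, zero_nsmul] at h
        exact hnt h
      · have : (k % p) • (1 : N) = (k % p - 1) • (1 : N) + 1 • (1 : N) := by
          rw [← add_nsmul]
          congr 1
          omega
        rw [one_nsmul] at this
        rw [this] at h
        have h2 : (k % p - 1) • (1 : N) = 0 := by
          have := congrArg (fun x => x + (-1 : N)) h
          simpa [add_assoc] using this
        have hdvd : p ∣ k % p - 1 := addOrderOf_dvd_iff_nsmul_eq_zero.mpr h2
        have hlt : k % p - 1 < p := by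
          have := Nat.mod_lt k (show 0 < p by omega)
          omega
        have h0' : k % p - 1 = 0 := Nat.eq_zero_of_dvd_of_lt hdvd hlt
        exact hk1 (by omega)
    have hmne : m • (1 : N) ≠ 0 := by
      intro h
      have hdvd : p ∣ m := addOrderOf_dvd_iff_nsmul_eq_zero.mpr h
      have := Nat.le_of_dvd hm0 hdvd
      omega
    have hfix : (m • (1 : N)) * (k • (1 : N)) = m • (1 : N) := by
      rw [hmulsmul, mul_comm, hmod, hmk, ← hmod]
    exact hmne (hf (k • (1 : N)) ⟨k' • (1 : N), hunit.1, hunit.2⟩ hune (m • (1 : N)) hfix)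
  exact ⟨comm, hprime, hexp⟩
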